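/- arXiv:1805.01519 — 5 statements merged into one kernel-verified Lean document; each statement's English description precedes it below -/
import Mathlib

section
/- Let E, E' be 2n×m real matrices with EᵀJE = (E')ᵀJE', where J = [[0, I_n],[−I_n, 0]], and suppose both E, E' have rank m. Then there exists a real symplectic matrix S ∈ Sp(2n,ℝ) (i.e., SᵀJS = J) with E' = SE. -/
open Matrix

namespace Stmt7Aux

variable {V : Type*} [AddCommGroup V] [Module ℝ V]

/-- A symplectic transvection moving `y₁` to `y₂`, fixing `U` pointwise. -/
lemma transvection_step (B : LinearMap.BilinForm ℝ V) (halt : B.IsAlt)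
    (U : Submodule ℝ V) (y₁ y₂ : V)
    (hperp : ∀ v ∈ U, B v (y₂ - y₁) = 0)
    (hne : B y₁ y₂ ≠ 0) :
    ∃ g : V →ₗ[ℝ] V, (∀ x y, B (g x) (g y) = B x y) ∧ (∀ v ∈ U, g v = v) ∧ g y₁ = y₂ := by
  set z : V := y₂ - y₁ with hz
  set c : ℝ := (B y₁ y₂)⁻¹ with hc
  have hflip : ∀ a b : V, B.flip a b = B b a := fun _ _ => rfl
  refine ⟨LinearMap.id + LinearMap.smulRight (c • B.flip z) z, ?_, ?_, ?_⟩
  · intro x y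
    simp only [LinearMap.add_apply, LinearMap.id_apply, LinearMap.smulRight_apply,
      LinearMap.smul_apply, smul_eq_mul, map_add, _root_.map_smul]
    simp only [hflip]
    have h1 : B z z = 0 := halt z
    have h2 : B z y = -(B y z) := (LinearMap.IsAlt.neg halt y z).symm
    rw [h1, h2]
    ring
  · intro v hv
    have : B v z = 0 := hperp v hv
    simp [this]
  · have hy1z : B y₁ z = B y₁ y₂ := by
      rw [hz, map_sub, halt.self_eq_zero y₁, sub_zero]
    simp only [LinearMap.add_apply, LinearMap.id_apply, LinearMap.smulRight_apply,
      LinearMap.smul_apply, smul_eq_mul]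
    simp only [hflip]
    rw [hy1z, hc, inv_mul_cancel₀ hne, one_smul, hz]
    abel

/-- From `y ∉ U`, get an element of the orthogonal complement of `U` not orthogonal to `y`. -/
lemma exists_perp_pairing [FiniteDimensional ℝ V] (B : LinearMap.BilinForm ℝ V)
    (hB : B.Nondegenerate) (halt : B.IsAlt) (U : Submodule ℝ V) {y : V} (hy : y ∉ U) :
    ∃ z : V, (∀ v ∈ U, B v z = 0) ∧ B z y ≠ 0 := by
  have hoo := B.orthogonal_orthogonal hB halt.isRefl U
  rw [← hoo] at hy
  rw [LinearMap.BilinForm.mem_orthogonal_iff] at hy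
  push_neg at hy
  obtain ⟨z, hzmem, hzy⟩ := hy
  exact ⟨z, fun v hv => hzmem v hv, hzy⟩

/-- Witt extension step: extend identity on `U` to move `y₁` to `y₂`. -/
lemma extend_step [FiniteDimensional ℝ V] (B : LinearMap.BilinForm ℝ V)
    (hB : B.Nondegenerate) (halt : B.IsAlt) (U : Submodule ℝ V) (y₁ y₂ : V)
    (h₁ : y₁ ∉ U) (h₂ : y₂ ∉ U) (hsame : ∀ v ∈ U, B v y₁ = B v y₂) :
    ∃ g : V →ₗ[ℝ] V, (∀ x y, B (g x) (g y) = B x y) ∧ (∀ v ∈ U, g v = v) ∧ g y₁ = y₂ := by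
  by_cases hc : B y₁ y₂ = 0
  · -- need an intermediate vector w
    obtain ⟨z₁, hz₁U, hz₁⟩ := exists_perp_pairing B hB halt U h₁
    obtain ⟨z₂, hz₂U, hz₂⟩ := exists_perp_pairing B hB halt U h₂
    -- choose t avoiding the two bad values
    set bad₁ : ℝ := -(B z₁ y₁) / (B z₂ y₁) with hbad₁
    set bad₂ : ℝ := -(B z₁ y₂) / (B z₂ y₂) with hbad₂
    obtain ⟨t, ht⟩ := Infinite.exists_notMem_finset ({bad₁, bad₂} : Finset ℝ)
    have ht₁ : t ≠ bad₁ := fun h => ht (by simp [h])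
    have ht₂ : t ≠ bad₂ := fun h => ht (by simp [h])
    set w : V := y₁ + z₁ + t • z₂ with hw
    have hwy₁ : B w y₁ = B z₁ y₁ + t * B z₂ y₁ := by
      simp only [hw, map_add, _root_.map_smul, LinearMap.add_apply, LinearMap.smul_apply,
        smul_eq_mul, halt.self_eq_zero y₁, zero_add]
    have hwy₂ : B w y₂ = B z₁ y₂ + t * B z₂ y₂ := by
      simp only [hw, map_add, _root_.map_smul, LinearMap.add_apply, LinearMap.smul_apply,
        smul_eq_mul, hc, zero_add]
    have hA : B w y₁ ≠ 0 := by
      rw [hwy₁]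
      intro habs
      by_cases hb : B z₂ y₁ = 0
      · rw [hb, mul_zero, add_zero] at habs; exact hz₁ habs
      · apply ht₁
        rw [hbad₁]
        field_simp
        linarith [habs]
    have hBB : B w y₂ ≠ 0 := by
      rw [hwy₂]
      intro habs
      apply ht₂
      rw [hbad₂]
      field_simp
      linarith [habs]
    -- first transvection : y₁ ↦ w
    obtain ⟨g₁, hg₁form, hg₁fix, hg₁y⟩ := transvection_step B halt U y₁ w
      (by
        intro v hv
        have : w - y₁ = z₁ + t • z₂ := by rw [hw]; abel
        rw [this, map_add, _root_.map_smul, hz₁U v hv, hz₂U v hv, smul_zero, add_zero])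
      (by
        intro habs
        apply hA
        rw [← LinearMap.IsAlt.neg halt w y₁] at habs
        rw [show B w y₁ = -(-(B w y₁)) by ring, habs]
        simp)
    -- second transvection : w ↦ y₂
    obtain ⟨g₂, hg₂form, hg₂fix, hg₂y⟩ := transvection_step B halt U w y₂
      (by
        intro v hv
        have hvw : B v w = B v y₁ := by
          simp only [hw, map_add, _root_.map_smul, hz₁U v hv, hz₂U v hv, smul_eq_mul,
            mul_zero, add_zero]
        rw [map_sub, hvw, hsame v hv, sub_self])
      hBB
    refine ⟨g₂ ∘ₗ g₁, ?_, ?_, ?_⟩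
    · intro x y
      simp only [LinearMap.comp_apply]
      rw [hg₂form, hg₁form]
    · intro v hv
      simp only [LinearMap.comp_apply]
      rw [hg₁fix v hv, hg₂fix v hv]
    · simp only [LinearMap.comp_apply]
      rw [hg₁y, hg₂y]
  · exact transvection_step B halt U y₁ y₂
      (fun v hv => by rw [map_sub, hsame v hv, sub_self]) hc

/-- Witt's theorem for symplectic forms: linearly independent tuples with equal Gram matrices
are related by an isometry. -/
lemma witt [FiniteDimensional ℝ V] (B : LinearMap.BilinForm ℝ V)
    (hB : B.Nondegenerate) (halt : B.IsAlt) :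
    ∀ (m : ℕ) (u u' : Fin m → V), LinearIndependent ℝ u → LinearIndependent ℝ u' →
    (∀ i j, B (u i) (u j) = B (u' i) (u' j)) →
    ∃ f : V →ₗ[ℝ] V, (∀ x y, B (f x) (f y) = B x y) ∧ ∀ i, f (u i) = u' i := by
  intro m
  induction m with
  | zero => exact fun u u' _ _ _ => ⟨LinearMap.id, fun _ _ => rfl, fun i => i.elim0⟩
  | succ k ih =>
    intro u u' hu hu' hg
    obtain ⟨f₀, hf₀, hmap⟩ := ih (u ∘ Fin.castSucc) (u' ∘ Fin.castSucc)
      (hu.comp _ (Fin.castSucc_injective k)) (hu'.comp _ (Fin.castSucc_injective k))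
      (fun i j => hg _ _)
    set U : Submodule ℝ V := Submodule.span ℝ (Set.range (u' ∘ Fin.castSucc)) with hU
    set y₁ : V := f₀ (u (Fin.last k)) with hy₁
    set y₂ : V := u' (Fin.last k) with hy₂
    have hf₀inj : Function.Injective f₀ := by
      rw [injective_iff_map_eq_zero]
      intro a ha
      apply hB.1
      intro nn
      rw [← hf₀ a nn, ha, map_zero, LinearMap.zero_apply]
    have hlast : (Fin.last k) ∉ Set.range (Fin.castSucc : Fin k → Fin (k + 1)) := by
      rintro ⟨i, hi⟩
      exact absurd hi (Fin.castSucc_lt_last i).ne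
    have h₂ : y₂ ∉ U := by
      have := hu'.notMem_span_image (s := Set.range (Fin.castSucc : Fin k → Fin (k + 1)))
        hlast
      rwa [hU, Set.range_comp]
    have hUeq : U = Submodule.map f₀
        (Submodule.span ℝ (Set.range (u ∘ Fin.castSucc))) := by
      rw [Submodule.map_span, ← Set.range_comp,
        show ⇑f₀ ∘ (u ∘ Fin.castSucc) = u' ∘ Fin.castSucc from funext hmap, hU]
    have h₁ : y₁ ∉ U := by
      rw [hUeq]
      rintro ⟨a, ha, hae⟩
      have : a = u (Fin.last k) := hf₀inj hae
      subst this
      have := hu.notMem_span_image (s := Set.range (Fin.castSucc : Fin k → Fin (k + 1)))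
        hlast
      rw [← Set.range_comp] at this
      exact this ha
    have hflip : ∀ a b : V, B.flip a b = B b a := fun _ _ => rfl
    have hsame : ∀ v ∈ U, B v y₁ = B v y₂ := by
      have hle : U ≤ LinearMap.ker (B.flip y₁ - B.flip y₂) := by
        rw [hU, Submodule.span_le]
        rintro _ ⟨i, rfl⟩
        simp only [SetLike.mem_coe, LinearMap.mem_ker, LinearMap.sub_apply,
          Function.comp_apply]
        simp only [hflip]
        have e0 : f₀ (u (Fin.castSucc i)) = u' (Fin.castSucc i) := hmap i
        have e1 : B (u' (Fin.castSucc i)) y₁ = B (u (Fin.castSucc i)) (u (Fin.last k)) := by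
          rw [hy₁, ← e0, hf₀]
        rw [e1, hg (Fin.castSucc i) (Fin.last k), ← hy₂, sub_self]
      intro v hv
      have h' := hle hv
      rw [LinearMap.mem_ker, LinearMap.sub_apply] at h'
      simp only [hflip] at h'
      exact sub_eq_zero.mp h'
    obtain ⟨g, hgform, hgfix, hgy⟩ := extend_step B hB halt U y₁ y₂ h₁ h₂ hsame
    refine ⟨g ∘ₗ f₀, ?_, ?_⟩
    · intro x y
      simp only [LinearMap.comp_apply]
      rw [hgform, hf₀]
    · intro i
      simp only [LinearMap.comp_apply]
      refine Fin.lastCases ?_ ?_ i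
      · rw [← hy₁, hgy, hy₂]
      · intro j
        rw [show f₀ (u (Fin.castSucc j)) = u' (Fin.castSucc j) from hmap j]
        exact hgfix _ (Submodule.subset_span ⟨j, rfl⟩)

end Stmt7Aux

theorem stmt_7 (n m : ℕ) (E E' : Matrix (Fin n ⊕ Fin n) (Fin m) ℝ)
    (J : Matrix (Fin n ⊕ Fin n) (Fin n ⊕ Fin n) ℝ)
    (hJ : J = Matrix.fromBlocks 0 1 (-1) 0)
    (hE : E.rank = m) (hE' : E'.rank = m)
    (h : Eᵀ * J * E = E'ᵀ * J * E') :
    ∃ S : Matrix (Fin n ⊕ Fin n) (Fin n ⊕ Fin n) ℝ,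
      Sᵀ * J * S = J ∧ E' = S * E := by
  classical
  -- basic facts about J
  have hJJ : J * J = -1 := by
    subst hJ
    rw [Matrix.fromBlocks_multiply]
    simp only [Matrix.zero_mul, Matrix.mul_zero, Matrix.one_mul, Matrix.mul_one,
      Matrix.neg_mul, Matrix.mul_neg, zero_add, add_zero, Matrix.one_mul]
    ext (i | i) (j | j) <;>
      simp [Matrix.fromBlocks, Matrix.one_apply]
  have hdet : J.det ≠ 0 := by
    intro h0
    have h1 : (J * J).det = 0 := by rw [Matrix.det_mul, h0, zero_mul]
    rw [hJJ] at h1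
    have h2 : ((-1 : Matrix (Fin n ⊕ Fin n) (Fin n ⊕ Fin n) ℝ)).det = (-1 : ℝ) ^ (n + n) := by
      rw [show (-1 : Matrix (Fin n ⊕ Fin n) (Fin n ⊕ Fin n) ℝ) = (-1 : ℝ) • 1 by simp,
        Matrix.det_smul, Matrix.det_one, mul_one]
      simp [Fintype.card_sum]
    rw [h2, (Even.neg_one_pow ⟨n, rfl⟩ : (-1 : ℝ) ^ (n + n) = 1)] at h1
    exact one_ne_zero h1
  have hJT : Jᵀ = -J := by
    subst hJ
    rw [Matrix.fromBlocks_transpose]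
    ext (i | i) (j | j) <;> simp [Matrix.fromBlocks]
  set B : LinearMap.BilinForm ℝ ((Fin n ⊕ Fin n) → ℝ) := Matrix.toBilin' J with hB
  have hBnd : B.Nondegenerate :=
    Matrix.nondegenerate_toBilin'_iff.mpr (Matrix.nondegenerate_of_det_ne_zero hdet)
  have halt : B.IsAlt := by
    intro x
    have h1 : B x x = x ⬝ᵥ J *ᵥ x := Matrix.toBilin'_apply' J x x
    have h2 : x ⬝ᵥ J *ᵥ x = -(x ⬝ᵥ J *ᵥ x) := by
      conv_lhs => rw [Matrix.dotProduct_mulVec, ← Matrix.mulVec_transpose]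
      rw [hJT, Matrix.neg_mulVec, neg_dotProduct, dotProduct_comm]
    have h3 : x ⬝ᵥ J *ᵥ x = 0 := by linarith
    rw [h1, h3]
  -- the entries of Fᵀ * J * F are values of B on columns
  have key : ∀ (ι : Type) (F : Matrix (Fin n ⊕ Fin n) ι ℝ) (i j : ι),
      (Fᵀ * J * F) i j = B (Fᵀ i) (Fᵀ j) := by
    intro ι F i j
    rw [hB, Matrix.toBilin'_apply]
    simp only [Matrix.mul_apply, Matrix.transpose_apply, Finset.sum_mul]
    rw [Finset.sum_comm]
  -- linear independence of columns
  have hcols : ∀ (F : Matrix (Fin n ⊕ Fin n) (Fin m) ℝ), F.rank = m →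
      LinearIndependent ℝ (fun j => Fᵀ j) := by
    intro F hF
    rw [linearIndependent_iff_card_eq_finrank_span]
    have : Set.range (fun j => Fᵀ j) = Set.range F.col := rfl
    rw [Set.finrank, this, ← Matrix.rank_eq_finrank_span_cols, hF, Fintype.card_fin]
  have hu : LinearIndependent ℝ (fun j => Eᵀ j) := hcols E hE
  have hu' : LinearIndependent ℝ (fun j => E'ᵀ j) := hcols E' hE'
  have hgram : ∀ i j, B (Eᵀ i) (Eᵀ j) = B (E'ᵀ i) (E'ᵀ j) := by
    intro i j
    rw [← key _ E, ← key _ E', h]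
  obtain ⟨f, hfform, hfmap⟩ :=
    Stmt7Aux.witt B hBnd halt m (fun j => Eᵀ j) (fun j => E'ᵀ j) hu hu' hgram
  set S : Matrix (Fin n ⊕ Fin n) (Fin n ⊕ Fin n) ℝ := LinearMap.toMatrix' f with hSdef
  have hS : ∀ v, S *ᵥ v = f v := by
    intro v
    rw [hSdef, ← Matrix.toLin'_apply, Matrix.toLin'_toMatrix']
  have hcol : ∀ i, Sᵀ i = f (Pi.single i 1) := by
    intro i
    funext a
    rw [← hS]
    simp [Matrix.mulVec, dotProduct, Pi.single_apply, Matrix.transpose_apply]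
  refine ⟨S, ?_, ?_⟩
  · -- symplectic condition
    ext i j
    rw [key _ S i j, hcol, hcol, hfform, hB, Matrix.toBilin'_single]
  · -- E' = S * E
    ext i j
    have h1 : E'ᵀ j = f (Eᵀ j) := (hfmap j).symm
    have h2 : S *ᵥ (Eᵀ j) = f (Eᵀ j) := hS _
    have : E' i j = (S *ᵥ (Eᵀ j)) i := by
      rw [h2, ← h1]
      rfl
    rw [this]
    simp [Matrix.mulVec, dotProduct, Matrix.mul_apply, Matrix.transpose_apply]
end

section
/- Given two n×m real matrices Q₁, Q₂, each of rank m with m < n, there exists a matrix X ∈ M_{n×(n−m)}(ℝ) such that both block matrices [Q₁ X] and [Q₂ X] (of size n×n) are invertible. -/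
open Matrix

lemma stmt_12_fromColumns_map {n a b : ℕ} {R S : Type*} [Semiring R] [Semiring S]
    (f : R → S) (A : Matrix (Fin n) (Fin a) R) (B : Matrix (Fin n) (Fin b) R) :
    (Matrix.fromCols A B).map f = Matrix.fromCols (A.map f) (B.map f) := by
  ext i j
  cases j <;> simp [Matrix.fromCols]

lemma stmt_12_exists {n m : ℕ} (e : Fin m ⊕ Fin (n - m) ≃ Fin n)
    (Q : Matrix (Fin n) (Fin m) ℝ) (hQ : Q.rank = m) :
    ∃ X : Matrix (Fin n) (Fin (n - m)) ℝ,
      IsUnit ((Matrix.fromCols Q X).submatrix id e.symm) := by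
  set V := Submodule.span ℝ (Set.range Qᵀ) with hV
  obtain ⟨W, hW⟩ := Submodule.exists_isCompl V
  have hVrank : Module.finrank ℝ V = m := by
    rw [← hQ, Matrix.rank_eq_finrank_span_cols]; rfl
  have hsum := Submodule.finrank_add_eq_of_isCompl hW
  have hWrank : Module.finrank ℝ W = n - m := by
    have hpi : Module.finrank ℝ (Fin n → ℝ) = n := by simp
    omega
  let b : Module.Basis (Fin (n - m)) ℝ W := Module.finBasisOfFinrankEq ℝ W hWrank
  refine ⟨Matrix.of fun i j => (b j : Fin n → ℝ) i, ?_⟩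
  rw [← Matrix.mulVec_surjective_iff_isUnit]
  have : LinearMap.range (Matrix.mulVecLin
      ((Matrix.fromCols Q (Matrix.of fun i j => (b j : Fin n → ℝ) i)).submatrix id e.symm)) = ⊤ := by
    rw [Matrix.range_mulVecLin]
    set X : Matrix (Fin n) (Fin (n - m)) ℝ := Matrix.of fun i j => (b j : Fin n → ℝ) i with hX
    have htr : ((Matrix.fromCols Q X).submatrix id e.symm)ᵀ
        = ((Matrix.fromCols Q X)ᵀ).submatrix e.symm id := rfl
    rw [show ((Matrix.fromCols Q X).submatrix id e.symm).col = _ from htr]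
    have hr : Set.range (((Matrix.fromCols Q X)ᵀ).submatrix e.symm id)
        = Set.range ((Matrix.fromCols Q X)ᵀ) := by
      have : (((Matrix.fromCols Q X)ᵀ).submatrix e.symm id)
          = fun j => ((Matrix.fromCols Q X)ᵀ) (e.symm j) := rfl
      rw [this]
      exact e.symm.surjective.range_comp _
    rw [hr, Matrix.transpose_fromCols]
    have hr2 : Set.range (Matrix.fromRows Qᵀ Xᵀ) = Set.range Qᵀ ∪ Set.range Xᵀ :=
      Set.Sum.elim_range _ _
    rw [hr2, Submodule.span_union, ← hV]
    have hXW : Submodule.span ℝ (Set.range Xᵀ) = W := by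
      have : Set.range Xᵀ = W.subtype '' (Set.range b) := by
        ext v
        simp only [Set.mem_image, Set.mem_range]
        constructor
        · rintro ⟨j, rfl⟩; exact ⟨b j, ⟨j, rfl⟩, rfl⟩
        · rintro ⟨w, ⟨j, rfl⟩, rfl⟩; exact ⟨j, rfl⟩
      rw [this, Submodule.span_image, b.span_eq, Submodule.map_subtype_top]
    rw [hXW]
    exact hW.codisjoint.eq_top
  intro v
  have := this ▸ Submodule.mem_top (R := ℝ) (x := v)
  obtain ⟨u, hu⟩ := this
  exact ⟨u, hu⟩

theorem stmt_12 (n m : ℕ) (hm : m < n) (Q₁ Q₂ : Matrix (Fin n) (Fin m) ℝ)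
    (hQ₁ : Q₁.rank = m) (hQ₂ : Q₂.rank = m) :
    ∃ X : Matrix (Fin n) (Fin (n - m)) ℝ,
      IsUnit ((Matrix.fromCols Q₁ X).submatrix id
        (finSumFinEquiv.trans (finCongr (Nat.add_sub_cancel' hm.le))).symm) ∧
      IsUnit ((Matrix.fromCols Q₂ X).submatrix id
        (finSumFinEquiv.trans (finCongr (Nat.add_sub_cancel' hm.le))).symm) := by
  set e : Fin m ⊕ Fin (n - m) ≃ Fin n :=
    finSumFinEquiv.trans (finCongr (Nat.add_sub_cancel' hm.le)) with he
  obtain ⟨X₁, h₁⟩ := stmt_12_exists e Q₁ hQ₁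
  obtain ⟨X₂, h₂⟩ := stmt_12_exists e Q₂ hQ₂
  -- the one-parameter family of candidate matrices
  let Xt : ℝ → Matrix (Fin n) (Fin (n - m)) ℝ :=
    fun t => Matrix.of fun i j => X₁ i j + t * (X₂ i j - X₁ i j)
  -- the polynomial version
  let Xp : Matrix (Fin n) (Fin (n - m)) (Polynomial ℝ) :=
    Matrix.of fun i j => Polynomial.C (X₁ i j) + Polynomial.X * Polynomial.C (X₂ i j - X₁ i j)
  have hmap : ∀ t : ℝ, Xp.map (Polynomial.evalRingHom t) = Xt t := by
    intro t; ext i j; simp [Xp, Xt]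
  -- determinant polynomials
  let p : Matrix (Fin n) (Fin m) ℝ → Polynomial ℝ := fun Q =>
    ((Matrix.fromCols (Q.map (Polynomial.C)) Xp).submatrix id e.symm).det
  have heval : ∀ (Q : Matrix (Fin n) (Fin m) ℝ) (t : ℝ),
      (p Q).eval t = ((Matrix.fromCols Q (Xt t)).submatrix id e.symm).det := by
    intro Q t
    have := (Polynomial.evalRingHom t).map_det
      ((Matrix.fromCols (Q.map (Polynomial.C)) Xp).submatrix id e.symm)
    rw [show ((Polynomial.evalRingHom t) (p Q)) = (p Q).eval t from rfl] at this
    rw [this, RingHom.mapMatrix_apply, ← Matrix.submatrix_map, stmt_12_fromColumns_map, hmap, Matrix.map_map]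
    congr 1
    have : ((Polynomial.evalRingHom t : Polynomial ℝ → ℝ) ∘ (Polynomial.C : ℝ → Polynomial ℝ)) = id := by
      funext x; simp
    rw [this, Matrix.map_id]
  have hXt0 : Xt 0 = X₁ := by ext i j; simp [Xt]
  have hXt1 : Xt 1 = X₂ := by ext i j; simp [Xt]
  have hdet : ∀ (Q : Matrix (Fin n) (Fin m) ℝ) (X : Matrix (Fin n) (Fin (n - m)) ℝ),
      IsUnit ((Matrix.fromCols Q X).submatrix id e.symm) ↔
        ((Matrix.fromCols Q X).submatrix id e.symm).det ≠ 0 := by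
    intro Q X
    rw [Matrix.isUnit_iff_isUnit_det, isUnit_iff_ne_zero]
  have hp₁ : p Q₁ ≠ 0 := by
    intro h
    have := heval Q₁ 0
    rw [h, hXt0] at this
    exact ((hdet Q₁ X₁).mp h₁) (by simpa using this.symm)
  have hp₂ : p Q₂ ≠ 0 := by
    intro h
    have := heval Q₂ 1
    rw [h, hXt1] at this
    exact ((hdet Q₂ X₂).mp h₂) (by simpa using this.symm)
  have hfin : ({t : ℝ | (p Q₁).IsRoot t} ∪ {t : ℝ | (p Q₂).IsRoot t}).Finite :=
    (Polynomial.finite_setOf_isRoot hp₁).union (Polynomial.finite_setOf_isRoot hp₂)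
  obtain ⟨t, ht⟩ := hfin.infinite_compl.nonempty
  refine ⟨Xt t, ?_, ?_⟩
  · rw [hdet Q₁ (Xt t), ← heval Q₁ t]
    intro h
    exact ht (Or.inl h)
  · rw [hdet Q₂ (Xt t), ← heval Q₂ t]
    intro h
    exact ht (Or.inr h)
end

section
/- Let Q, Q', P, P' be n×m real matrices of rank m with Q Pᵀ = Q' (P')ᵀ. Then there exists B ∈ GL(m,ℝ) such that Q' = QB and P' = P(Bᵀ)⁻¹. -/
open Matrix

lemma aux_unit_of_rank {m : ℕ} (A : Matrix (Fin m) (Fin m) ℝ) (h : A.rank = m) : IsUnit A := by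
  have hsurj : Function.Surjective A.mulVecLin := by
    rw [← LinearMap.range_eq_top]
    apply Submodule.eq_top_of_finrank_eq
    rw [Module.finrank_fin_fun]; exact h
  have hbij : Function.Bijective A.mulVecLin :=
    ⟨(LinearMap.injective_iff_surjective).mpr hsurj, hsurj⟩
  have he : (Matrix.toLinAlgEquiv' A : (Fin m → ℝ) →ₗ[ℝ] (Fin m → ℝ)) = A.mulVecLin := by
    ext v i; simp [Matrix.toLinAlgEquiv'_apply, Matrix.mulVecLin]
  have : IsUnit (Matrix.toLinAlgEquiv' A : Module.End ℝ (Fin m → ℝ)) := by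
    rw [Module.End.isUnit_iff, he]; exact hbij
  rwa [isUnit_map_iff (Matrix.toLinAlgEquiv' : Matrix (Fin m) (Fin m) ℝ ≃ₐ[ℝ] _)] at this

lemma aux_gram_unit {n m : ℕ} (A : Matrix (Fin n) (Fin m) ℝ) (h : A.rank = m) :
    IsUnit (Aᵀ * A) := by
  apply aux_unit_of_rank
  rw [Matrix.rank_transpose_mul_self]; exact h

lemma aux_key {n m : ℕ} (Q Q' P P' : Matrix (Fin n) (Fin m) ℝ)
    (hQ : Q.rank = m) (hP' : P'.rank = m) (h : Q * Pᵀ = Q' * P'ᵀ) :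
    (Pᵀ * P' * (P'ᵀ * P')⁻¹) * P'ᵀ = Pᵀ := by
  have hKQ := aux_gram_unit Q hQ
  have hKP' := aux_gram_unit P' hP'
  have hKQd := (Matrix.isUnit_iff_isUnit_det _).mp hKQ
  have hKP'd := (Matrix.isUnit_iff_isUnit_det _).mp hKP'
  have hcQ : (Qᵀ * Q)⁻¹ * (Qᵀ * Q) = 1 := Matrix.nonsing_inv_mul _ hKQd
  have hcP' : P'ᵀ * P' * (P'ᵀ * P')⁻¹ = 1 := Matrix.mul_nonsing_inv _ hKP'd
  set C : Matrix (Fin m) (Fin m) ℝ := (Qᵀ * Q)⁻¹ * (Qᵀ * Q') with hCdef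
  have hC : Pᵀ = C * P'ᵀ := by
    have h1 : Qᵀ * (Q * Pᵀ) = Qᵀ * (Q' * P'ᵀ) := by rw [h]
    calc Pᵀ = (Qᵀ * Q)⁻¹ * (Qᵀ * Q) * Pᵀ := by rw [hcQ, Matrix.one_mul]
      _ = (Qᵀ * Q)⁻¹ * (Qᵀ * (Q * Pᵀ)) := by rw [Matrix.mul_assoc, Matrix.mul_assoc]
      _ = (Qᵀ * Q)⁻¹ * (Qᵀ * (Q' * P'ᵀ)) := by rw [h1]
      _ = C * P'ᵀ := by rw [hCdef, ← Matrix.mul_assoc Qᵀ, ← Matrix.mul_assoc]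
  have hB : Pᵀ * P' * (P'ᵀ * P')⁻¹ = C := by
    rw [hC, Matrix.mul_assoc C, Matrix.mul_assoc C, hcP', Matrix.mul_one]
  rw [hB, ← hC]

theorem stmt_14 (n m : ℕ) (Q Q' P P' : Matrix (Fin n) (Fin m) ℝ)
    (hQ : Q.rank = m) (hQ' : Q'.rank = m) (hP : P.rank = m) (hP' : P'.rank = m)
    (h : Q * Pᵀ = Q' * P'ᵀ) :
    ∃ B : Matrix (Fin m) (Fin m) ℝ, IsUnit B ∧ Q' = Q * B ∧ P' = P * (Bᵀ)⁻¹ := by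
  have hKP := aux_gram_unit P hP
  have hKP' := aux_gram_unit P' hP'
  have hKPd := (Matrix.isUnit_iff_isUnit_det _).mp hKP
  have hKP'd := (Matrix.isUnit_iff_isUnit_det _).mp hKP'
  have hcP : Pᵀ * P * (Pᵀ * P)⁻¹ = 1 := Matrix.mul_nonsing_inv _ hKPd
  have hcP' : P'ᵀ * P' * (P'ᵀ * P')⁻¹ = 1 := Matrix.mul_nonsing_inv _ hKP'd
  set B : Matrix (Fin m) (Fin m) ℝ := Pᵀ * P' * (P'ᵀ * P')⁻¹ with hBdef
  set B' : Matrix (Fin m) (Fin m) ℝ := P'ᵀ * P * (Pᵀ * P)⁻¹ with hB'def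
  have hBP : B * P'ᵀ = Pᵀ := aux_key Q Q' P P' hQ hP' h
  have hB'P : B' * Pᵀ = P'ᵀ := by
    have := aux_key Q' Q P' P hQ' hP h.symm
    simpa [transpose_transpose] using this
  have hBB' : B * B' = 1 := by
    have hc : B * B' * (Pᵀ * P) = 1 * (Pᵀ * P) := by
      rw [Matrix.one_mul, Matrix.mul_assoc B, hB'def, Matrix.mul_assoc (P'ᵀ * P),
        Matrix.nonsing_inv_mul _ hKPd, Matrix.mul_one, ← Matrix.mul_assoc B, hBP]
    exact hKP.mul_right_cancel hc
  have hB'B : B' * B = 1 := by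
    have hc : B' * B * (P'ᵀ * P') = 1 * (P'ᵀ * P') := by
      rw [Matrix.one_mul, Matrix.mul_assoc B', hBdef, Matrix.mul_assoc (Pᵀ * P'),
        Matrix.nonsing_inv_mul _ hKP'd, Matrix.mul_one, ← Matrix.mul_assoc B', hB'P]
    exact hKP'.mul_right_cancel hc
  have hBunit : IsUnit B := ⟨⟨B, B', hBB', hB'B⟩, rfl⟩
  refine ⟨B, hBunit, ?_, ?_⟩
  · have : Q * B = Q' := by
      rw [hBdef, ← Matrix.mul_assoc, ← Matrix.mul_assoc, h, Matrix.mul_assoc Q',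
        Matrix.mul_assoc Q', hcP', Matrix.mul_one]
    exact this.symm
  · have hPB : P' * Bᵀ = P := by
      have := congrArg Matrix.transpose hBP
      simpa [Matrix.transpose_mul] using this
    have hBT : IsUnit Bᵀ.det := by
      rw [Matrix.det_transpose]
      exact (Matrix.isUnit_iff_isUnit_det _).mp hBunit
    rw [← hPB, Matrix.mul_nonsing_inv_cancel_right _ _ hBT]
end

section
/- Let Q, Q', P, P' be n×m real matrices of rank m with Qᵀ P = (Q')ᵀ P'. Then there exists A ∈ GL(n,ℝ) such that Q' = AQ and P = Aᵀ P'. -/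
open Matrix LinearMap Submodule

lemma section_ext {K : Type*} [Field K] {V W : Type*} [AddCommGroup V] [Module K V]
    [AddCommGroup W] [Module K W]
    (t : V →ₗ[K] W) (α : W →ₗ[K] V) (ht : Function.Surjective t)
    (X : Submodule K W) (hX : IsCompl (LinearMap.ker (t ∘ₗ α)) X) :
    ∃ s : W →ₗ[K] V, t ∘ₗ s = LinearMap.id ∧ ∀ x ∈ X, s (t (α x)) = α x := by
  set g : W →ₗ[K] W := t ∘ₗ α with hg
  let e : X ≃ₗ[K] LinearMap.range g :=
    (Submodule.quotientEquivOfIsCompl _ _ hX).symm.trans g.quotKerEquivRange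
  have he : ∀ x : X, (e x : W) = g x := by
    intro x
    simp [e, Submodule.quotientEquivOfIsCompl_symm_apply, LinearMap.quotKerEquivRange]
  obtain ⟨D, hD⟩ := Submodule.exists_isCompl (LinearMap.range g)
  obtain ⟨s₀, hs₀⟩ := t.exists_rightInverse_of_surjective (LinearMap.range_eq_top.2 ht)
  let π₁ := Submodule.linearProjOfIsCompl _ _ hD
  let π₂ := Submodule.linearProjOfIsCompl _ _ hD.symm
  refine ⟨(α ∘ₗ X.subtype ∘ₗ e.symm.toLinearMap ∘ₗ π₁) + (s₀ ∘ₗ D.subtype ∘ₗ π₂), ?_, ?_⟩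
  · ext w
    have h1 : t (α ((e.symm (π₁ w) : X) : W)) = ((π₁ w : W)) := by
      have := he (e.symm (π₁ w))
      rw [LinearEquiv.apply_symm_apply] at this
      simpa [hg] using this.symm
    have h2 : t (s₀ ((π₂ w : W))) = (π₂ w : W) := by
      have := LinearMap.congr_fun hs₀ ((π₂ w : W)); simpa using this
    have h3 : ((π₁ w : W)) + ((π₂ w : W)) = w :=
      Submodule.projection_add_projection_eq_self hD w
    simp only [LinearMap.comp_apply, LinearMap.add_apply, map_add, LinearMap.id_apply,
      Submodule.coe_subtype, LinearEquiv.coe_coe]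
    rw [h1, h2, h3]
  · intro x hx
    have hgx : g x ∈ LinearMap.range g := ⟨x, rfl⟩
    have hπ₁ : π₁ (g x) = ⟨g x, hgx⟩ :=
      Submodule.linearProjOfIsCompl_apply_left hD ⟨g x, hgx⟩
    have hπ₂ : π₂ (g x) = 0 := Submodule.projectionOnto_apply_of_mem_right hD.symm hgx
    have hesymm : e.symm ⟨g x, hgx⟩ = ⟨x, hx⟩ := by
      rw [LinearEquiv.symm_apply_eq]
      apply Subtype.ext
      exact (he ⟨x, hx⟩)
    simp only [LinearMap.comp_apply, LinearMap.add_apply, Submodule.coe_subtype,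
      LinearEquiv.coe_coe]
    rw [show t (α x) = g x from rfl, hπ₁, hπ₂, hesymm]
    simp

lemma mulVecLin_inj' {a b : ℕ} {M N : Matrix (Fin a) (Fin b) ℝ}
    (h : M.mulVecLin = N.mulVecLin) : M = N := by
  ext i j
  have := LinearMap.congr_fun h (Pi.single j 1)
  simp only [Matrix.mulVecLin_apply, Matrix.mulVec_single_one] at this
  exact congrFun this i

lemma full_col_rank_inj {a b : ℕ} {M : Matrix (Fin a) (Fin b) ℝ} (hM : M.rank = b) :
    Function.Injective M.mulVecLin := by
  rw [← LinearMap.ker_eq_bot]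
  have h1 := LinearMap.finrank_range_add_finrank_ker M.mulVecLin
  rw [show Module.finrank ℝ (Fin b → ℝ) = b by simp] at h1
  have h2 : Module.finrank ℝ (LinearMap.range M.mulVecLin) = b := hM
  rw [← Submodule.finrank_eq_zero (R := ℝ)]
  omega

lemma full_row_rank_surj {a b : ℕ} {M : Matrix (Fin a) (Fin b) ℝ} (hM : M.rank = a) :
    Function.Surjective M.mulVecLin := by
  rw [← LinearMap.range_eq_top]
  apply Submodule.eq_top_of_finrank_eq
  have h2 : Module.finrank ℝ (LinearMap.range M.mulVecLin) = a := hM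
  simp [h2]


set_option maxHeartbeats 2000000
set_option synthInstance.maxHeartbeats 400000

lemma abstract_key {n m : ℕ}
    (q q' : (Fin m → ℝ) →ₗ[ℝ] (Fin n → ℝ)) (t t' : (Fin n → ℝ) →ₗ[ℝ] (Fin m → ℝ))
    (hqi : Function.Injective q) (hq'i : Function.Injective q')
    (hts : Function.Surjective t) (ht's : Function.Surjective t')
    (htq : t ∘ₗ q = t' ∘ₗ q') :
    ∃ f : (Fin n → ℝ) →ₗ[ℝ] (Fin n → ℝ),
      Function.Bijective f ∧ (∀ x, f (q x) = q' x) ∧ (∀ v, t' (f v) = t v) := by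
  classical
  set g : (Fin m → ℝ) →ₗ[ℝ] (Fin m → ℝ) := t ∘ₗ q with hgdef
  set N := LinearMap.ker g with hNdef
  obtain ⟨X, hX⟩ := Submodule.exists_isCompl N
  obtain ⟨s, hs, hsX⟩ := section_ext t q hts X hX
  have hX2 : IsCompl (LinearMap.ker (t' ∘ₗ q')) X := by rw [← htq]; exact hX
  obtain ⟨s', hs', hs'X⟩ := section_ext t' q' ht's X hX2
  set K := LinearMap.ker t with hKdef
  set K' := LinearMap.ker t' with hK'def
  have hqNK : N.map q ≤ K := by
    rintro _ ⟨x, hx, rfl⟩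
    exact hx
  have hq'NK' : N.map q' ≤ K' := by
    rintro _ ⟨x, hx, rfl⟩
    have hx' : (t' ∘ₗ q') x = 0 := by rw [← htq]; exact hx
    exact hx'
  set N₁ : Submodule ℝ K := (N.map q).comap K.subtype with hN₁def
  set N₁' : Submodule ℝ K' := (N.map q').comap K'.subtype with hN₁'def
  obtain ⟨C, hC⟩ := Submodule.exists_isCompl N₁
  obtain ⟨C', hC'⟩ := Submodule.exists_isCompl N₁'
  -- equivs
  let eqN : N ≃ₗ[ℝ] N.map q := Submodule.equivMapOfInjective q hqi N
  let eqN' : N ≃ₗ[ℝ] N.map q' := Submodule.equivMapOfInjective q' hq'i N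
  let c₁ : N₁ ≃ₗ[ℝ] N.map q := Submodule.comapSubtypeEquivOfLe hqNK
  let c₁' : N₁' ≃ₗ[ℝ] N.map q' := Submodule.comapSubtypeEquivOfLe hq'NK'
  -- dimension count
  have hrt : LinearMap.range t = ⊤ := LinearMap.range_eq_top.2 hts
  have hrt' : LinearMap.range t' = ⊤ := LinearMap.range_eq_top.2 ht's
  have hfK : m + Module.finrank ℝ K = n := by
    have h1 := LinearMap.finrank_range_add_finrank_ker t
    rw [hrt] at h1
    simpa using h1
  have hfK' : m + Module.finrank ℝ K' = n := by
    have h1 := LinearMap.finrank_range_add_finrank_ker t'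
    rw [hrt'] at h1
    simpa using h1
  have hfN₁ : Module.finrank ℝ N₁ = Module.finrank ℝ N :=
    (c₁.trans eqN.symm).finrank_eq
  have hfN₁' : Module.finrank ℝ N₁' = Module.finrank ℝ N :=
    (c₁'.trans eqN'.symm).finrank_eq
  have hdC := Submodule.finrank_add_eq_of_isCompl hC
  have hdC' := Submodule.finrank_add_eq_of_isCompl hC'
  have hCC' : Module.finrank ℝ C = Module.finrank ℝ C' := by omega
  haveI : Module.Free ℝ C := Module.Free.of_divisionRing ℝ C
  haveI : Module.Free ℝ C' := Module.Free.of_divisionRing ℝ C'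
  let φ : C ≃ₗ[ℝ] C' := LinearEquiv.ofFinrankEq _ _ hCC'
  -- projections in K
  let πN₁ : K →ₗ[ℝ] N₁ := Submodule.linearProjOfIsCompl _ _ hC
  let πC : K →ₗ[ℝ] C := Submodule.linearProjOfIsCompl _ _ hC.symm
  -- gamma
  let γ₁ : K →ₗ[ℝ] (Fin n → ℝ) :=
    (N.map q').subtype ∘ₗ (eqN'.toLinearMap ∘ₗ eqN.symm.toLinearMap ∘ₗ c₁.toLinearMap) ∘ₗ πN₁
  let γ₂ : K →ₗ[ℝ] (Fin n → ℝ) := K'.subtype ∘ₗ C'.subtype ∘ₗ φ.toLinearMap ∘ₗ πC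
  let γ : K →ₗ[ℝ] (Fin n → ℝ) := γ₁ + γ₂
  have hγ₁mem : ∀ v : K, γ₁ v ∈ N.map q' := fun v =>
    ((eqN'.toLinearMap ∘ₗ eqN.symm.toLinearMap ∘ₗ c₁.toLinearMap) (πN₁ v)).2
  have hγ₂mem : ∀ v : K, γ₂ v ∈ K' := fun v => ((C'.subtype ∘ₗ φ.toLinearMap ∘ₗ πC) v).2
  have hγmem : ∀ v : K, γ v ∈ K' := fun v =>
    K'.add_mem (hq'NK' (hγ₁mem v)) (hγ₂mem v)
  have ht'γ : ∀ v : K, t' (γ v) = 0 := fun v => hγmem v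
  -- γ on N.map q
  have hγq : ∀ (x : Fin m → ℝ) (hx : x ∈ N) (hmem : q x ∈ K), γ ⟨q x, hmem⟩ = q' x := by
    intro x hx hmem
    set u : K := ⟨q x, hmem⟩ with hudef
    have hu : u ∈ N₁ := ⟨x, hx, rfl⟩
    have h1 : πN₁ u = ⟨u, hu⟩ := Submodule.linearProjOfIsCompl_apply_left hC ⟨u, hu⟩
    have h2 : πC u = 0 := Submodule.projectionOnto_apply_of_mem_right hC.symm hu
    have h3 : c₁ ⟨u, hu⟩ = ⟨q x, ⟨x, hx, rfl⟩⟩ := by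
      apply Subtype.ext
      exact Submodule.comapSubtypeEquivOfLe_apply_coe hqNK ⟨u, hu⟩
    have h4 : eqN ⟨x, hx⟩ = ⟨q x, ⟨x, hx, rfl⟩⟩ := by
      apply Subtype.ext
      exact Submodule.coe_equivMapOfInjective_apply q hqi N ⟨x, hx⟩
    have h5 : eqN.symm ⟨q x, ⟨x, hx, rfl⟩⟩ = ⟨x, hx⟩ := by
      rw [LinearEquiv.symm_apply_eq, h4]
    have h6 : ((eqN' ⟨x, hx⟩ : N.map q') : Fin n → ℝ) = q' x :=
      Submodule.coe_equivMapOfInjective_apply q' hq'i N ⟨x, hx⟩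
    show γ₁ u + γ₂ u = q' x
    have hγ₂u : γ₂ u = 0 := by
      show K'.subtype (C'.subtype (φ (πC u))) = 0
      rw [h2, map_zero, map_zero, map_zero]
    have hγ₁u : γ₁ u = q' x := by
      show (N.map q').subtype ((eqN'.toLinearMap ∘ₗ eqN.symm.toLinearMap ∘ₗ c₁.toLinearMap) (πN₁ u)) = q' x
      rw [h1]
      show ((eqN' (eqN.symm (c₁ ⟨u, hu⟩))) : Fin n → ℝ) = q' x
      rw [h3, h5]
      exact h6
    rw [hγ₁u, hγ₂u, add_zero]
  -- γ injective
  have hγinj : ∀ v : K, γ v = 0 → v = 0 := by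
    intro v hv
    have hab : γ₁ v + γ₂ v = 0 := hv
    set a' : K' := ⟨γ₁ v, hq'NK' (hγ₁mem v)⟩ with ha'def
    set b' : K' := (C'.subtype ∘ₗ φ.toLinearMap ∘ₗ πC) v with hb'def
    have hsum : a' + b' = 0 := by
      apply Subtype.ext
      exact hab
    have ha'N : a' ∈ N₁' := hγ₁mem v
    have hb'mem : b' ∈ C' := ((φ.toLinearMap ∘ₗ πC) v).2
    have hb'N : b' ∈ N₁' := by
      have hba : b' = -a' := eq_neg_of_add_eq_zero_right hsum
      rw [hba]
      exact N₁'.neg_mem ha'N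
    have hb'0 : b' = 0 := Submodule.disjoint_def.mp hC'.disjoint b' hb'N hb'mem
    have ha'0 : a' = 0 := by
      have := hsum
      rw [hb'0, add_zero] at this
      exact this
    have hπC : πC v = 0 := by
      have h1 : C'.subtype (φ (πC v)) = 0 := by
        have hb0 : (b' : Fin n → ℝ) = 0 := by rw [hb'0]; rfl
        exact Subtype.ext hb0
      have h2 : φ (πC v) = 0 := by
        apply Subtype.ext
        simpa using h1
      exact φ.injective (by rw [h2, map_zero])
    have hπN : πN₁ v = 0 := by
      have h1 : γ₁ v = 0 := congrArg Subtype.val ha'0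
      have h2 : (((eqN'.toLinearMap ∘ₗ eqN.symm.toLinearMap ∘ₗ c₁.toLinearMap) (πN₁ v)) : Fin n → ℝ) = 0 := h1
      have h3 : ((eqN'.toLinearMap ∘ₗ eqN.symm.toLinearMap ∘ₗ c₁.toLinearMap) (πN₁ v)) = 0 :=
        Subtype.ext h2
      have h4 : eqN' (eqN.symm (c₁ (πN₁ v))) = 0 := h3
      have h5 : eqN.symm (c₁ (πN₁ v)) = 0 := by
        apply eqN'.injective
        rw [h4, map_zero]
      have h6 : c₁ (πN₁ v) = 0 := by
        apply eqN.symm.injective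
        rw [h5, map_zero]
      apply c₁.injective
      rw [h6, map_zero]
    have hdecomp := Submodule.projection_add_projection_eq_self hC v
    apply Subtype.ext
    have : ((πN₁ v : K) : Fin n → ℝ) + ((πC v : K) : Fin n → ℝ) = (v : Fin n → ℝ) := by
      rw [← Submodule.coe_add]
      exact congrArg Subtype.val hdecomp
    rw [hπN, hπC] at this
    simpa using this.symm
  -- f
  have hker : ∀ v, v - s (t v) ∈ K := by
    intro v
    have h1 : t (s (t v)) = t v := LinearMap.congr_fun hs (t v)
    show t (v - s (t v)) = 0
    rw [map_sub, h1, sub_self]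
  let ρ : (Fin n → ℝ) →ₗ[ℝ] K := LinearMap.codRestrict K (LinearMap.id - s ∘ₗ t) hker
  let f : (Fin n → ℝ) →ₗ[ℝ] (Fin n → ℝ) := γ ∘ₗ ρ + s' ∘ₗ t
  have ht'f : ∀ v, t' (f v) = t v := by
    intro v
    show t' (γ (ρ v) + s' (t v)) = t v
    have h1 : t' (s' (t v)) = t v := LinearMap.congr_fun hs' (t v)
    rw [map_add, ht'γ, h1, zero_add]
  have hfq : ∀ x, f (q x) = q' x := by
    intro x
    have hdecomp : ((Submodule.linearProjOfIsCompl N X hX x : N) : Fin m → ℝ) +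
        ((Submodule.linearProjOfIsCompl X N hX.symm x : X) : Fin m → ℝ) = x :=
      Submodule.projection_add_projection_eq_self hX x
    set xN := Submodule.linearProjOfIsCompl N X hX x with hxN
    set xX := Submodule.linearProjOfIsCompl X N hX.symm x with hxX
    have hgxN : g (xN : Fin m → ℝ) = 0 := xN.2
    have htqx : t (q x) = g (xX : Fin m → ℝ) := by
      have h0 : g x = g (xN : Fin m → ℝ) + g (xX : Fin m → ℝ) := by
        rw [← map_add, hdecomp]
      show g x = _
      rw [h0, hgxN, zero_add]
    have hsgx : s (g (xX : Fin m → ℝ)) = q (xX : Fin m → ℝ) := hsX _ xX.2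
    have hs'gx : s' (g (xX : Fin m → ℝ)) = q' (xX : Fin m → ℝ) := by
      have h0 : t' (q' (xX : Fin m → ℝ)) = g (xX : Fin m → ℝ) :=
        (LinearMap.congr_fun htq (xX : Fin m → ℝ)).symm
      have h1 := hs'X _ xX.2
      rw [h0] at h1
      exact h1
    have hρ : (ρ (q x) : Fin n → ℝ) = q (xN : Fin m → ℝ) := by
      show q x - s (t (q x)) = q (xN : Fin m → ℝ)
      rw [htqx, hsgx]
      have h0 : q x = q (xN : Fin m → ℝ) + q (xX : Fin m → ℝ) := by
        rw [← map_add, hdecomp]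
      rw [h0]; abel
    have hρmem : q (xN : Fin m → ℝ) ∈ K := by rw [← hρ]; exact (ρ (q x)).2
    have hρeq : ρ (q x) = ⟨q (xN : Fin m → ℝ), hρmem⟩ := Subtype.ext hρ
    show γ (ρ (q x)) + s' (t (q x)) = q' x
    rw [hρeq, hγq _ xN.2, htqx, hs'gx, ← map_add, hdecomp]
  have hfinj : Function.Injective f := by
    rw [← LinearMap.ker_eq_bot, Submodule.eq_bot_iff]
    intro v hv
    have hfv : f v = 0 := hv
    have htv : t v = 0 := by rw [← ht'f v, hfv, map_zero]
    have hρv : ρ v = ⟨v, htv⟩ := by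
      apply Subtype.ext
      show v - s (t v) = v
      rw [htv, map_zero, sub_zero]
    have hγ0 : γ (⟨v, htv⟩ : K) = 0 := by
      have h1 : γ (ρ v) + s' (t v) = 0 := hfv
      rw [hρv, htv, map_zero, add_zero] at h1
      exact h1
    exact congrArg Subtype.val (hγinj _ hγ0)
  exact ⟨f, ⟨hfinj, (LinearMap.injective_iff_surjective).mp hfinj⟩, hfq, ht'f⟩


theorem stmt_15 (n m : ℕ) (hm : m ≤ n) (Q Q' P P' : Matrix (Fin n) (Fin m) ℝ)
    (hQ : Q.rank = m) (hQ' : Q'.rank = m) (hP : P.rank = m) (hP' : P'.rank = m)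
    (h : Qᵀ * P = Q'ᵀ * P') :
    ∃ A : Matrix (Fin n) (Fin n) ℝ, IsUnit A ∧ Q' = A * Q ∧ P = Aᵀ * P' := by
  classical
  have hqi : Function.Injective Q.mulVecLin := full_col_rank_inj hQ
  have hq'i : Function.Injective Q'.mulVecLin := full_col_rank_inj hQ'
  have hts : Function.Surjective Pᵀ.mulVecLin :=
    full_row_rank_surj (by rw [Matrix.rank_transpose]; exact hP)
  have ht's : Function.Surjective P'ᵀ.mulVecLin :=
    full_row_rank_surj (by rw [Matrix.rank_transpose]; exact hP')
  have hmat : Pᵀ * Q = P'ᵀ * Q' := by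
    calc Pᵀ * Q = (Qᵀ * P)ᵀ := by rw [Matrix.transpose_mul, Matrix.transpose_transpose]
    _ = (Q'ᵀ * P')ᵀ := by rw [h]
    _ = P'ᵀ * Q' := by rw [Matrix.transpose_mul, Matrix.transpose_transpose]
  have htq : Pᵀ.mulVecLin ∘ₗ Q.mulVecLin = P'ᵀ.mulVecLin ∘ₗ Q'.mulVecLin := by
    rw [← Matrix.mulVecLin_mul, ← Matrix.mulVecLin_mul, hmat]
  obtain ⟨f, hfbij, hfq, ht'f⟩ :=
    abstract_key Q.mulVecLin Q'.mulVecLin Pᵀ.mulVecLin P'ᵀ.mulVecLin hqi hq'i hts ht's htq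
  set A : Matrix (Fin n) (Fin n) ℝ := LinearMap.toMatrixAlgEquiv' f with hAdef
  have hAf : A.mulVecLin = f := by
    have h0 := Matrix.toLinAlgEquiv'_toMatrixAlgEquiv' f
    refine LinearMap.ext fun v => ?_
    have h1 := LinearMap.congr_fun h0 v
    rw [Matrix.toLinAlgEquiv'_apply] at h1
    simpa [Matrix.mulVecLin_apply, hAdef] using h1
  refine ⟨A, ?_, ?_, ?_⟩
  · have hfu : IsUnit f := (Module.End.isUnit_iff f).mpr hfbij
    exact hfu.map (LinearMap.toMatrixAlgEquiv' :
      ((Fin n → ℝ) →ₗ[ℝ] (Fin n → ℝ)) ≃ₐ[ℝ] Matrix (Fin n) (Fin n) ℝ)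
  · apply mulVecLin_inj'
    rw [Matrix.mulVecLin_mul, hAf]
    exact LinearMap.ext fun x => (hfq x).symm
  · have hPt : Pᵀ = P'ᵀ * A := by
      apply mulVecLin_inj'
      rw [Matrix.mulVecLin_mul, hAf]
      exact LinearMap.ext fun v => (ht'f v).symm
    calc P = Pᵀᵀ := by rw [Matrix.transpose_transpose]
    _ = (P'ᵀ * A)ᵀ := by rw [hPt]
    _ = Aᵀ * P' := by rw [Matrix.transpose_mul, Matrix.transpose_transpose]
end

section
/- Every m×m real matrix ξ with rank ξ ≥ 2m − n (for some n ≥ m) can be written as ξ = Pᵀ Q for some n×m real matrices Q, P each of rank m. -/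
open Matrix

theorem stmt_19 (n m : ℕ) (hm : m ≤ n) (ξ : Matrix (Fin m) (Fin m) ℝ)
    (hξ : 2 * m - n ≤ ξ.rank) :
    ∃ Q P : Matrix (Fin n) (Fin m) ℝ, Q.rank = m ∧ P.rank = m ∧ ξ = Pᵀ * Q := by
  classical
  set f : (Fin m → ℝ) →ₗ[ℝ] (Fin m → ℝ) := ξ.mulVecLin with hf
  obtain ⟨W, hW⟩ := Submodule.exists_isCompl (LinearMap.range f)
  set k := Module.finrank ℝ W with hk
  have hdim : ξ.rank + k = m := by
    have := Submodule.finrank_add_eq_of_isCompl hW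
    rw [Module.finrank_fin_fun] at this
    exact this
  have hmkn : m + k ≤ n := by
    have h2 : 2 * m ≤ ξ.rank + n := by omega
    omega
  -- the injective "extend by zero" map ℝ^m → ℝ^n
  set q : (Fin m → ℝ) →ₗ[ℝ] (Fin n → ℝ) :=
    LinearMap.pi (fun j : Fin n =>
      if h : (j : ℕ) < m then LinearMap.proj (⟨(j : ℕ), h⟩ : Fin m) else 0) with hq
  have hq_apply : ∀ (x : Fin m → ℝ) (j : Fin n),
      q x j = if h : (j : ℕ) < m then x ⟨(j : ℕ), h⟩ else 0 := by
    intro x j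
    simp only [hq, LinearMap.pi_apply]
    split <;> simp_all
  have hq_inj : Function.Injective q := by
    rw [injective_iff_map_eq_zero]
    intro x hx
    funext i
    have := congrFun hx (Fin.castLE hm i)
    rw [hq_apply] at this
    simpa [i.isLt] using this
  -- basis of the complement W
  let b : Module.Basis (Fin k) ℝ W := Module.finBasis ℝ W
  -- embedding of Fin k into the tail of Fin n
  let emb : Fin k → Fin n := fun i => ⟨m + (i : ℕ), by omega⟩
  let c : (Fin n → ℝ) →ₗ[ℝ] (Fin m → ℝ) :=
    W.subtype ∘ₗ (b.equivFun.symm : (Fin k → ℝ) ≃ₗ[ℝ] W).toLinearMap ∘ₗ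
      LinearMap.funLeft ℝ ℝ emb
  set g : (Fin n → ℝ) →ₗ[ℝ] (Fin m → ℝ) :=
    f ∘ₗ LinearMap.funLeft ℝ ℝ (Fin.castLE hm) + c with hg
  -- g ∘ q = f
  have hgq : g ∘ₗ q = f := by
    apply LinearMap.ext
    intro x
    have h1 : (fun j : Fin m => q x (Fin.castLE hm j)) = x := by
      funext j
      rw [hq_apply]
      simp [Fin.castLE, j.isLt]
    have h2 : (fun i : Fin k => q x (emb i)) = 0 := by
      funext i
      rw [hq_apply]
      simp [emb]
    show g (q x) = f x
    rw [hg]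
    show f (fun j => q x (Fin.castLE hm j)) + c (q x) = f x
    have h3 : c (q x) = 0 := by
      simp only [c, LinearMap.comp_apply, LinearMap.funLeft]
      show W.subtype (b.equivFun.symm (fun i => q x (emb i))) = 0
      rw [h2]
      simp
    rw [h1, h3, add_zero]
  -- g is surjective
  have hg_surj : Function.Surjective g := by
    rw [← LinearMap.range_eq_top]
    rw [← top_le_iff, ← hW.sup_eq_top]
    rw [sup_le_iff]
    constructor
    · rintro v ⟨x, rfl⟩
      exact ⟨q x, by rw [← LinearMap.comp_apply, hgq]⟩
    · intro w hw
      set z : Fin k → ℝ := b.equivFun ⟨w, hw⟩ with hz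
      refine ⟨fun j : Fin n => if h : m ≤ (j : ℕ) ∧ (j : ℕ) - m < k then z ⟨(j : ℕ) - m, h.2⟩ else 0, ?_⟩
      set y : Fin n → ℝ := fun j : Fin n =>
        if h : m ≤ (j : ℕ) ∧ (j : ℕ) - m < k then z ⟨(j : ℕ) - m, h.2⟩ else 0 with hy
      have h1 : (fun j : Fin m => y (Fin.castLE hm j)) = 0 := by
        funext j
        have : ¬ (m ≤ ((Fin.castLE hm j : Fin n) : ℕ) ∧ ((Fin.castLE hm j : Fin n) : ℕ) - m < k) := by
          simp only [Fin.coe_castLE]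
          omega
        simp [hy, this]
      have h2 : (fun i : Fin k => y (emb i)) = z := by
        funext i
        have hcond : m ≤ ((emb i : Fin n) : ℕ) ∧ ((emb i : Fin n) : ℕ) - m < k := by
          simp only [emb]
          omega
        simp only [hy]
        rw [dif_pos hcond]
        congr 1
        apply Fin.ext
        simp [emb]
      simp only [hg, LinearMap.add_apply, LinearMap.comp_apply, LinearMap.funLeft_apply]
      show f (fun j => y (Fin.castLE hm j)) + c y = w
      have h3 : c y = w := by
        simp only [c, LinearMap.comp_apply, LinearMap.funLeft]
        show W.subtype (b.equivFun.symm (fun i => y (emb i))) = w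
        rw [h2, hz, LinearEquiv.symm_apply_apply]
        rfl
      rw [h1, map_zero, zero_add, h3]
  refine ⟨LinearMap.toMatrix' q, (LinearMap.toMatrix' g)ᵀ, ?_, ?_, ?_⟩
  · have hmv : (LinearMap.toMatrix' q).mulVecLin = q := by
      rw [← Matrix.toLin'_apply', Matrix.toLin'_toMatrix']
    rw [Matrix.rank, hmv, LinearMap.finrank_range_of_inj hq_inj, Module.finrank_fin_fun]
  · rw [Matrix.rank_transpose]
    have hmv : (LinearMap.toMatrix' g).mulVecLin = g := by
      rw [← Matrix.toLin'_apply', Matrix.toLin'_toMatrix']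
    rw [Matrix.rank, hmv, LinearMap.range_eq_top.mpr hg_surj]
    simp
  · rw [transpose_transpose, ← LinearMap.toMatrix'_comp, hgq, hf, ← Matrix.toLin'_apply',
      LinearMap.toMatrix'_toLin']
end
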